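/- Let D be a complete, cocomplete, extremally co-well-powered, (extremal epi, mono) category. Then KD is complete and cocomplete. -/

import Mathlib

open CategoryTheory CategoryTheory.Limits

universe w v u v₂ u₂

namespace FilteredCats

variable {D : Type u} [Category.{v} D]

/-- The class of morphisms of `D` with source `X`. -/
def MorFrom (X : D) : Type (max u v) := Σ Y : D, X ⟶ Y

/-- `Dom δ₁ δ₂` means `δ₁ ≥ δ₂`: there is `h` with `h ∘ δ₁ = δ₂`. -/
def Dom {X : D} (δ₁ δ₂ : MorFrom X) : Prop :=
  ∃ h : δ₁.1 ⟶ δ₂.1, δ₁.2 ≫ h = δ₂.2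

/-- A projective filtration on `X`: a nonempty, directed, saturated class of
morphisms with source `X`. -/
structure ProjFilt (X : D) where
  carrier : Set (MorFrom X)
  nonempty' : carrier.Nonempty
  directed' : ∀ δ₁ ∈ carrier, ∀ δ₂ ∈ carrier, ∃ δ ∈ carrier, Dom δ δ₁ ∧ Dom δ δ₂
  saturated' : ∀ δ₁ ∈ carrier, ∀ δ₂, Dom δ₁ δ₂ → δ₂ ∈ carrier

/-- The pull back of a set of morphisms with source `X` along `f : X' ⟶ X`. -/
def pullSet {X' X : D} (f : X' ⟶ X) (S : Set (MorFrom X)) : Set (MorFrom X') :=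
  {δ' | ∃ δ ∈ S, δ' = ⟨δ.1, f ≫ δ.2⟩}

/-- The pull back of a projective filtration along `f : X' ⟶ X`. -/
def ProjFilt.pull {X' X : D} (f : X' ⟶ X) (P : ProjFilt X) : ProjFilt X' where
  carrier := pullSet f P.carrier
  nonempty' := by
    obtain ⟨δ, hδ⟩ := P.nonempty'
    exact ⟨⟨δ.1, f ≫ δ.2⟩, δ, hδ, rfl⟩
  directed' := by
    rintro _ ⟨δ₁, h₁, rfl⟩ _ ⟨δ₂, h₂, rfl⟩
    obtain ⟨δ, hδ, ⟨g₁, hg₁⟩, ⟨g₂, hg₂⟩⟩ := P.directed' δ₁ h₁ δ₂ h₂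
    exact ⟨⟨δ.1, f ≫ δ.2⟩, ⟨δ, hδ, rfl⟩,
      ⟨g₁, by simp [hg₁]⟩, ⟨g₂, by simp [hg₂]⟩⟩
  saturated' := by
    rintro _ ⟨δ, hδ, rfl⟩ δ₂ ⟨h, hh⟩
    refine ⟨⟨δ₂.1, δ.2 ≫ h⟩, P.saturated' δ hδ _ ⟨h, rfl⟩, ?_⟩
    obtain ⟨Y₂, g₂⟩ := δ₂
    have hg : g₂ = f ≫ (δ.2 ≫ h) := by simpa using hh.symm
    exact Sigma.ext rfl (heq_of_eq hg)

/-- A projectively filtered object of `D`. -/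
structure PObj (D : Type u) [Category.{v} D] where
  base : D
  filt : ProjFilt base

/-- A morphism of projectively filtered objects: a morphism of the underlying
objects such that the pull back of the target filtration is contained in the
source filtration. -/
structure PHom (A B : PObj D) : Type v where
  toHom : A.base ⟶ B.base
  mem : ∀ δ ∈ B.filt.carrier, (⟨δ.1, toHom ≫ δ.2⟩ : MorFrom A.base) ∈ A.filt.carrier

theorem PHom.ext' {A B : PObj D} {f g : PHom A B} (h : f.toHom = g.toHom) : f = g := by
  cases f; cases g; cases h; rfl

instance : Category.{v} (PObj D) where
  Hom := PHom
  id A := ⟨𝟙 A.base, fun δ hδ => by simp only [Category.id_comp]; exact hδ⟩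
  comp {A B C} f g := ⟨f.toHom ≫ g.toHom, fun δ hδ => by
    have h1 := g.mem δ hδ
    have h2 := f.mem _ h1
    simpa using h2⟩
  id_comp f := PHom.ext' (Category.id_comp _)
  comp_id f := PHom.ext' (Category.comp_id _)
  assoc f g h := PHom.ext' (Category.assoc _ _ _)

@[simp] theorem PObj.id_toHom (A : PObj D) : PHom.toHom (𝟙 A) = 𝟙 A.base := rfl
@[simp] theorem PObj.comp_toHom {A B C : PObj D} (f : A ⟶ B) (g : B ⟶ C) :
    PHom.toHom (f ≫ g) = PHom.toHom f ≫ PHom.toHom g := rfl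

/-- The forgetful functor `PD → D`. -/
def Pforget (D : Type u) [Category.{v} D] : PObj D ⥤ D where
  obj A := A.base
  map f := PHom.toHom f

/-- The discrete filtration functor `D → PD`, `X ↦ (X, M(X))`. -/
def Pdiscrete (D : Type u) [Category.{v} D] : D ⥤ PObj D where
  obj X :=
    { base := X
      filt :=
        { carrier := Set.univ
          nonempty' := ⟨⟨X, 𝟙 X⟩, trivial⟩
          directed' := fun δ₁ _ δ₂ _ =>
            ⟨⟨X, 𝟙 X⟩, trivial, ⟨δ₁.2, Category.id_comp _⟩, ⟨δ₂.2, Category.id_comp _⟩⟩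
          saturated' := fun _ _ _ _ => trivial } }
  map f := ⟨f, fun _ _ => trivial⟩

/-- The functor `PD → PE` induced by a functor `G : D → E`. -/
def Pfunctor {E : Type u₂} [Category.{v₂} E] (G : D ⥤ E) : PObj D ⥤ PObj E where
  obj A :=
    { base := G.obj A.base
      filt :=
        { carrier := {δ' | ∃ δ ∈ A.filt.carrier,
            Dom (⟨G.obj δ.1, G.map δ.2⟩ : MorFrom (G.obj A.base)) δ'}
          nonempty' := by
            obtain ⟨δ, hδ⟩ := A.filt.nonempty'
            exact ⟨⟨G.obj δ.1, G.map δ.2⟩, δ, hδ, ⟨𝟙 _, Category.comp_id _⟩⟩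
          directed' := by
            rintro δ'₁ ⟨δ₁, h₁, g₁, hg₁⟩ δ'₂ ⟨δ₂, h₂, g₂, hg₂⟩
            obtain ⟨δ, hδ, ⟨k₁, hk₁⟩, ⟨k₂, hk₂⟩⟩ := A.filt.directed' δ₁ h₁ δ₂ h₂
            refine ⟨⟨G.obj δ.1, G.map δ.2⟩, ⟨δ, hδ, ⟨𝟙 _, Category.comp_id _⟩⟩,
              ⟨G.map k₁ ≫ g₁, ?_⟩, ⟨G.map k₂ ≫ g₂, ?_⟩⟩
            · rw [← Category.assoc, ← G.map_comp, hk₁, hg₁]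
            · rw [← Category.assoc, ← G.map_comp, hk₂, hg₂]
          saturated' := by
            rintro δ'₁ ⟨δ, hδ, g, hg⟩ δ'₂ ⟨h, hh⟩
            exact ⟨δ, hδ, ⟨g ≫ h, by rw [← Category.assoc, hg, hh]⟩⟩ } }
  map {A B} f :=
    ⟨G.map (PHom.toHom f), by
      rintro δ' ⟨δ, hδ, g, hg⟩
      exact ⟨⟨δ.1, PHom.toHom f ≫ δ.2⟩, f.mem δ hδ,
        ⟨g, by rw [← hg, ← Category.assoc, ← G.map_comp]⟩⟩⟩
  map_id A := PHom.ext' (G.map_id _)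
  map_comp f g := PHom.ext' (G.map_comp _ _)

/-- An extremal epimorphism: an epimorphism such that in any factorisation
through a monomorphism, the monomorphism is an isomorphism. -/
def ExtremalEpi {C : Type u₂} [Category.{v₂} C] {X Y : C} (e : X ⟶ Y) : Prop :=
  Epi e ∧ ∀ ⦃Z : C⦄ (g : X ⟶ Z) (m : Z ⟶ Y), Mono m → g ≫ m = e → IsIso m

/-- An (extremal epi, mono) category: every morphism factors as an extremal
epimorphism followed by a monomorphism and such factorisations have the
diagonal fill-in property. -/
structure EMCat (C : Type u₂) [Category.{v₂} C] : Prop where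
  fact : ∀ {X Y : C} (f : X ⟶ Y), ∃ (Z : C) (e : X ⟶ Z) (m : Z ⟶ Y),
    ExtremalEpi e ∧ Mono m ∧ e ≫ m = f
  diag : ∀ {A B Z X : C} (e : A ⟶ B) (m : Z ⟶ X) (g : A ⟶ Z) (h : B ⟶ X),
    ExtremalEpi e → Mono m → g ≫ m = e ≫ h → ∃ d : B ⟶ Z, e ≫ d = g ∧ d ≫ m = h

/-- A projective filtration is reduced if it has an initial subclass of
extremal epimorphisms. -/
def ProjFilt.Reduced {X : D} (P : ProjFilt X) : Prop :=
  ∀ δ ∈ P.carrier, ∃ ε ∈ P.carrier, ExtremalEpi ε.2 ∧ Dom ε δ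

/-- The category of reduced projectively filtered objects of `D`. -/
def QObj (D : Type u) [Category.{v} D] := ObjectProperty.FullSubcategory (fun A : PObj D => A.filt.Reduced)

instance : Category.{v} (QObj D) := ObjectProperty.FullSubcategory.category _

/-- The inclusion functor `QD → PD`. -/
def qpInclusion (D : Type u) [Category.{v} D] : QObj D ⥤ PObj D :=
  ObjectProperty.ι _

/-- A category is extremally co-well-powered if every object has, up to
isomorphism, only a (small) set of extremal epimorphisms out of it. -/
def ECWP (C : Type u₂) [Category.{v₂} C] : Prop :=
  ∀ X : C, ∃ (ι : Type v₂) (Y : ι → C) (e : ∀ i, X ⟶ Y i),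
    (∀ i, ExtremalEpi (e i)) ∧
    ∀ ⦃Z : C⦄ (f : X ⟶ Z), ExtremalEpi f → ∃ (i : ι) (φ : Y i ≅ Z), e i ≫ φ.hom = f

/-- The category `(P, D)` associated to a projective filtration: objects are the
elements of `P`, morphisms `δ₁ → δ₂` are morphisms `g` of `D` with `g ∘ δ₁ = δ₂`. -/
def FiltCat {X : D} (P : ProjFilt X) : Type (max u v) := {δ : MorFrom X // δ ∈ P.carrier}

instance {X : D} (P : ProjFilt X) : Category.{v} (FiltCat P) where
  Hom δ₁ δ₂ := {g : δ₁.1.1 ⟶ δ₂.1.1 // δ₁.1.2 ≫ g = δ₂.1.2}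
  id δ := ⟨𝟙 _, Category.comp_id _⟩
  comp f g := ⟨f.1 ≫ g.1, by rw [← Category.assoc, f.2, g.2]⟩
  id_comp f := Subtype.ext (Category.id_comp _)
  comp_id f := Subtype.ext (Category.comp_id _)
  assoc f g h := Subtype.ext (Category.assoc _ _ _)

/-- The functor `(P, D) → D` sending an element of the filtration to its target. -/
def FiltDiagram {X : D} (P : ProjFilt X) : FiltCat P ⥤ D where
  obj δ := δ.1.1
  map g := g.1

/-- The canonical cone on the diagram of a projective filtration, with apex the
underlying object. -/
def filtCone {X : D} (P : ProjFilt X) : Limits.Cone (FiltDiagram P) where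
  pt := X
  π :=
    { app := fun δ => δ.1.2
      naturality := fun δ₁ δ₂ g => by
        have := g.2
        dsimp [FiltDiagram] at *
        simp [this] }

/-- A reduced projective filtration is an iso-filtration if the canonical cone
on its diagram is a limit cone, i.e. the limit exists and the canonical morphism
from the underlying object to it is an isomorphism. -/
def IsoFilt {X : D} (P : ProjFilt X) : Prop :=
  Nonempty (Limits.IsLimit (filtCone P))

/-- The category of iso-filtered objects of `D`. -/
def KObj (D : Type u) [Category.{v} D] :=
  ObjectProperty.FullSubcategory (fun A : QObj D => IsoFilt A.obj.filt)

instance : Category.{v} (KObj D) := ObjectProperty.FullSubcategory.category _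

/-- The inclusion functor `KD → QD`. -/
def kqInclusion (D : Type u) [Category.{v} D] : KObj D ⥤ QObj D :=
  ObjectProperty.ι _

/-- The forgetful functor `KD → D`. -/
def Kforget (D : Type u) [Category.{v} D] : KObj D ⥤ D :=
  kqInclusion D ⋙ qpInclusion D ⋙ Pforget D

/-- The smallest projective filtration containing a class of morphisms
(as a class). -/
def genSet {X : D} (S : Set (MorFrom X)) : Set (MorFrom X) :=
  {δ | ∀ P : ProjFilt X, S ⊆ P.carrier → δ ∈ P.carrier}

/-- The reduction of a class of morphisms: the saturation of the class of
extremal epimorphism parts of (extremal epi, mono)-factorisations of its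
elements. -/
def redSet {X : D} (S : Set (MorFrom X)) : Set (MorFrom X) :=
  {δ | ∃ ε : MorFrom X, ExtremalEpi ε.2 ∧
    (∃ δ' ∈ S, ∃ m : ε.1 ⟶ δ'.1, Mono m ∧ ε.2 ≫ m = δ'.2) ∧ Dom ε δ}

/-- The push forward of a filtration class along `f` (single morphism case). -/
def pushSet {X Y : D} (f : X ⟶ Y) (S : Set (MorFrom X)) : Set (MorFrom Y) :=
  {g | (⟨g.1, f ≫ g.2⟩ : MorFrom X) ∈ S}

/-- The discrete filtration on an object, as an iso-filtered object. -/
def kDiscreteObj (X : D) : KObj D where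
  obj :=
    { obj := (Pdiscrete D).obj X
      property := fun δ _ => ⟨⟨X, 𝟙 X⟩, trivial,
        ⟨(inferInstance : Epi (𝟙 X)), fun _ g m hm hgm => by
          haveI : IsSplitEpi m := ⟨⟨⟨g, hgm⟩⟩⟩
          exact isIso_of_mono_of_isSplitEpi m⟩,
        ⟨δ.2, Category.id_comp _⟩⟩ }
  property := ⟨{
    lift := fun c => c.π.app ⟨⟨X, 𝟙 X⟩, trivial⟩
    fac := fun c j => by
      have h := c.π.naturality (X := ⟨⟨X, 𝟙 X⟩, trivial⟩) (Y := j)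
        ⟨j.1.2, Category.id_comp _⟩
      dsimp [FiltDiagram, filtCone] at h ⊢
      exact h.symm.trans (Category.id_comp _)
    uniq := fun c m hm => by
      have h := hm ⟨⟨X, 𝟙 X⟩, trivial⟩
      rw [← Category.comp_id m]
      exact h }⟩

/-- The discrete filtration functor `D → KD`. -/
def kDiscrete (D : Type u) [Category.{v} D] : D ⥤ KObj D where
  obj X := kDiscreteObj X
  map f := ⟨f, fun _ _ => trivial⟩
  map_id _ := rfl
  map_comp _ _ := rfl

/-- The morphism in `KD` from an iso-filtered object to the discrete object on
the target of an element of its filtration. -/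
def kToDiscrete {A : KObj D} (δ : MorFrom A.obj.obj.base)
    (hδ : δ ∈ A.obj.obj.filt.carrier) : A ⟶ kDiscreteObj δ.1 :=
  ⟨⟨show PHom A.obj.obj ((kDiscreteObj δ.1).obj.obj) from
    ⟨δ.2, fun γ _ => A.obj.obj.filt.saturated' δ hδ _ ⟨γ.2, rfl⟩⟩⟩⟩

/-- The natural transformation `P(G) → P(H)` induced by `ν : G → H`. -/
def Pnat {E : Type u₂} [Category.{v₂} E] {G H : D ⥤ E} (ν : G ⟶ H) :
    Pfunctor G ⟶ Pfunctor H where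
  app A :=
    ⟨ν.app A.base, by
      rintro δ' ⟨δ, hδ, g, hg⟩
      exact ⟨δ, hδ, ⟨ν.app δ.1 ≫ g, by
        rw [← Category.assoc, ν.naturality, Category.assoc, hg]; rfl⟩⟩⟩
  naturality {A B} f := PHom.ext' (ν.naturality (PHom.toHom f))


/-! ### Auxiliary lemmas -/

section Aux

lemma dom_refl {X : D} (δ : MorFrom X) : Dom δ δ := ⟨𝟙 _, Category.comp_id _⟩

lemma dom_trans {X : D} {δ₁ δ₂ δ₃ : MorFrom X} (h₁ : Dom δ₁ δ₂) (h₂ : Dom δ₂ δ₃) :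
    Dom δ₁ δ₃ := by
  obtain ⟨g, hg⟩ := h₁; obtain ⟨k, hk⟩ := h₂
  exact ⟨g ≫ k, by rw [← Category.assoc, hg, hk]⟩

lemma morFrom_ext {X Y : D} {f g : X ⟶ Y} (h : f = g) :
    (⟨Y, f⟩ : MorFrom X) = ⟨Y, g⟩ := by rw [h]

lemma term_mem [Limits.HasTerminal D] {X : D} (P : ProjFilt X) :
    (⟨⊤_ D, terminal.from X⟩ : MorFrom X) ∈ P.carrier := by
  obtain ⟨δ, hδ⟩ := P.nonempty'
  exact P.saturated' δ hδ _ ⟨terminal.from δ.1, terminal.comp_from _⟩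

/-- The pairing of two morphisms with common source. -/
noncomputable def pairOf [Limits.HasBinaryProducts D] {X : D} (δ₁ δ₂ : MorFrom X) : MorFrom X :=
  ⟨δ₁.1 ⨯ δ₂.1, prod.lift δ₁.2 δ₂.2⟩

lemma pair_dom_left [Limits.HasBinaryProducts D] {X : D} (δ₁ δ₂ : MorFrom X) :
    Dom (pairOf δ₁ δ₂) δ₁ := ⟨prod.fst, prod.lift_fst _ _⟩

lemma pair_dom_right [Limits.HasBinaryProducts D] {X : D} (δ₁ δ₂ : MorFrom X) :
    Dom (pairOf δ₁ δ₂) δ₂ := ⟨prod.snd, prod.lift_snd _ _⟩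

lemma pair_mem [Limits.HasBinaryProducts D] {X : D} (P : ProjFilt X) {δ₁ δ₂ : MorFrom X}
    (h₁ : δ₁ ∈ P.carrier) (h₂ : δ₂ ∈ P.carrier) : pairOf δ₁ δ₂ ∈ P.carrier := by
  obtain ⟨δ, hδ, ⟨g₁, hg₁⟩, ⟨g₂, hg₂⟩⟩ := P.directed' δ₁ h₁ δ₂ h₂
  refine P.saturated' δ hδ _ ⟨prod.lift g₁ g₂, ?_⟩
  show δ.2 ≫ prod.lift g₁ g₂ = prod.lift δ₁.2 δ₂.2
  rw [prod.comp_lift, hg₁, hg₂]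

/-- The filtration generated by a class of morphisms. -/
noncomputable def genFilt [Limits.HasTerminal D] [Limits.HasBinaryProducts D] {X : D}
    (S : Set (MorFrom X)) : ProjFilt X where
  carrier := genSet S
  nonempty' := ⟨⟨⊤_ D, terminal.from X⟩, fun P _ => term_mem P⟩
  directed' := fun δ₁ h₁ δ₂ h₂ =>
    ⟨pairOf δ₁ δ₂, fun P hP => pair_mem P (h₁ P hP) (h₂ P hP),
      pair_dom_left _ _, pair_dom_right _ _⟩
  saturated' := fun δ₁ h₁ δ₂ hd P hP => P.saturated' δ₁ (h₁ P hP) δ₂ hd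

lemma subset_gen {X : D} (S : Set (MorFrom X)) : S ⊆ genSet S :=
  fun _ h _ hP => hP h

lemma gen_sub {X : D} {S : Set (MorFrom X)} {P : ProjFilt X} (h : S ⊆ P.carrier) :
    genSet S ⊆ P.carrier := fun _ hδ => hδ P h

/-- Constructor for morphisms in a filtration category. -/
def filtHom {X : D} {P : ProjFilt X} (a b : FiltCat P) (g : a.1.1 ⟶ b.1.1)
    (hg : a.1.2 ≫ g = b.1.2) : a ⟶ b := ⟨g, hg⟩

lemma cone_w {X : D} {P : ProjFilt X} (s : Limits.Cone (FiltDiagram P)) {a b : FiltCat P}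
    (g : a.1.1 ⟶ b.1.1) (hg : a.1.2 ≫ g = b.1.2) :
    s.π.app a ≫ g = s.π.app b := s.w (filtHom a b g hg)

lemma subset_red (hEM : EMCat D) {X : D} (S : Set (MorFrom X)) : S ⊆ redSet S := by
  intro δ hδ
  obtain ⟨Z, e, m, he, hm, hem⟩ := hEM.fact δ.2
  exact ⟨⟨Z, e⟩, he, ⟨δ, hδ, m, hm, hem⟩, ⟨m, hem⟩⟩

/-- The reduction of a filtration. -/
def redFilt (hEM : EMCat D) {X : D} (P : ProjFilt X) : ProjFilt X where
  carrier := redSet P.carrier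
  nonempty' := P.nonempty'.mono (subset_red hEM _)
  directed' := by
    rintro δ₁ ⟨ε₁, he₁, ⟨δ'₁, hδ'₁, m₁, hm₁, hem₁⟩, hd₁⟩
      δ₂ ⟨ε₂, he₂, ⟨δ'₂, hδ'₂, m₂, hm₂, hem₂⟩, hd₂⟩
    obtain ⟨δ, hδ, ⟨h₁, hh₁⟩, ⟨h₂, hh₂⟩⟩ := P.directed' δ'₁ hδ'₁ δ'₂ hδ'₂
    obtain ⟨Z, e, m, he, hm, hem⟩ := hEM.fact δ.2
    have dom1 : Dom (⟨Z, e⟩ : MorFrom X) ε₁ := by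
      obtain ⟨d, hd, -⟩ := hEM.diag e m₁ ε₁.2 (m ≫ h₁) he hm₁
        (by rw [hem₁, ← Category.assoc, hem, hh₁])
      exact ⟨d, hd⟩
    have dom2 : Dom (⟨Z, e⟩ : MorFrom X) ε₂ := by
      obtain ⟨d, hd, -⟩ := hEM.diag e m₂ ε₂.2 (m ≫ h₂) he hm₂
        (by rw [hem₂, ← Category.assoc, hem, hh₂])
      exact ⟨d, hd⟩
    exact ⟨⟨Z, e⟩, ⟨⟨Z, e⟩, he, ⟨δ, hδ, m, hm, hem⟩, dom_refl _⟩,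
      dom_trans dom1 hd₁, dom_trans dom2 hd₂⟩
  saturated' := by
    rintro δ₁ ⟨ε, he, hw, hd⟩ δ₂ hd₂
    exact ⟨ε, he, hw, dom_trans hd hd₂⟩

lemma redFilt_reduced (hEM : EMCat D) {X : D} (P : ProjFilt X) :
    (redFilt hEM P).Reduced := by
  rintro δ ⟨ε, he, hw, hd⟩
  exact ⟨ε, ⟨ε, he, hw, dom_refl _⟩, he, hd⟩

/-- Pulling back the reduction of a filtration along a morphism whose pull back of
the original filtration lands in a reduced filtration. -/
lemma pull_red_sub (hEM : EMCat D) {X' X : D} (f : X' ⟶ X) (P : ProjFilt X)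
    (QA : ProjFilt X') (hred : QA.Reduced)
    (h : ∀ δ ∈ P.carrier, (⟨δ.1, f ≫ δ.2⟩ : MorFrom X') ∈ QA.carrier) :
    ∀ δ ∈ redSet P.carrier, (⟨δ.1, f ≫ δ.2⟩ : MorFrom X') ∈ QA.carrier := by
  rintro δ ⟨ε, he, ⟨δ', hδ', m, hm, hem⟩, k, hk⟩
  have h1 : (⟨δ'.1, f ≫ δ'.2⟩ : MorFrom X') ∈ QA.carrier := h δ' hδ'
  obtain ⟨εA, hεA, heA, h', hh'⟩ := hred _ h1
  obtain ⟨d, hd, -⟩ := hEM.diag εA.2 m (f ≫ ε.2) h' heA hm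
    (by rw [hh', ← hem, Category.assoc])
  have h2 : (⟨ε.1, f ≫ ε.2⟩ : MorFrom X') ∈ QA.carrier :=
    QA.saturated' εA hεA _ ⟨d, hd⟩
  exact QA.saturated' _ h2 _ ⟨k, by rw [Category.assoc, hk]⟩

/-- The push forward of a filtration along a morphism. -/
noncomputable def pushFilt [Limits.HasTerminal D] [Limits.HasBinaryProducts D] {X Y : D}
    (f : X ⟶ Y) (P : ProjFilt X) : ProjFilt Y where
  carrier := pushSet f P.carrier
  nonempty' := ⟨⟨⊤_ D, terminal.from Y⟩, by
    show (⟨⊤_ D, f ≫ terminal.from Y⟩ : MorFrom X) ∈ P.carrier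
    rw [morFrom_ext (terminal.comp_from f)]; exact term_mem P⟩
  directed' := by
    intro g₁ h₁ g₂ h₂
    refine ⟨pairOf g₁ g₂, ?_, pair_dom_left _ _, pair_dom_right _ _⟩
    show (⟨g₁.1 ⨯ g₂.1, f ≫ prod.lift g₁.2 g₂.2⟩ : MorFrom X) ∈ P.carrier
    rw [morFrom_ext (prod.comp_lift f g₁.2 g₂.2)]
    exact pair_mem P h₁ h₂
  saturated' := by
    rintro g₁ h₁ g₂ ⟨k, hk⟩
    exact P.saturated' _ h₁ _ ⟨k, by rw [Category.assoc, hk]⟩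

end Aux

/-! ### Existence of limits of reduced filtration diagrams -/

section LimQ

variable {C : D} (Q : ProjFilt C) {ι : Type v} (Y : ι → D) (e : ∀ i, C ⟶ Y i)

/-- Small index category: those chosen extremal epis whose graph lies in `Q`. -/
def SmallIdx : Type v := {i : ι // (⟨Y i, e i⟩ : MorFrom C) ∈ Q.carrier}

instance : Category.{v} (SmallIdx Q Y e) where
  Hom i j := {g : Y i.1 ⟶ Y j.1 // e i.1 ≫ g = e j.1}
  id i := ⟨𝟙 _, Category.comp_id _⟩
  comp f g := ⟨f.1 ≫ g.1, by rw [← Category.assoc, f.2, g.2]⟩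
  id_comp f := Subtype.ext (Category.id_comp _)
  comp_id f := Subtype.ext (Category.comp_id _)
  assoc f g h := Subtype.ext (Category.assoc _ _ _)

/-- The small diagram of targets. -/
def smallDiag : SmallIdx Q Y e ⥤ D where
  obj i := Y i.1
  map g := g.1

variable {Q Y e}

lemma exists_pres (hQ : Q.Reduced)
    (hcover : ∀ ⦃Z : D⦄ (f : C ⟶ Z), ExtremalEpi f →
      ∃ (i : ι) (φ : Y i ≅ Z), e i ≫ φ.hom = f)
    {δ : MorFrom C} (hδ : δ ∈ Q.carrier) :
    ∃ (i : SmallIdx Q Y e) (h : Y i.1 ⟶ δ.1), e i.1 ≫ h = δ.2 := by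
  obtain ⟨ε, hε, hext, k, hk⟩ := hQ δ hδ
  obtain ⟨i, φ, hφ⟩ := hcover ε.2 hext
  have hei : (⟨Y i, e i⟩ : MorFrom C) ∈ Q.carrier := by
    refine Q.saturated' ε hε _ ⟨φ.inv, ?_⟩
    rw [← hφ, Category.assoc, φ.hom_inv_id, Category.comp_id]
  exact ⟨⟨i, hei⟩, φ.hom ≫ k, by rw [← Category.assoc, hφ, hk]⟩

variable [Limits.HasLimits D]

lemma pi_welldef (hQ : Q.Reduced) (hext : ∀ i, ExtremalEpi (e i))
    (hcover : ∀ ⦃Z : D⦄ (f : C ⟶ Z), ExtremalEpi f →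
      ∃ (i : ι) (φ : Y i ≅ Z), e i ≫ φ.hom = f)
    {δ : MorFrom C} (i i' : SmallIdx Q Y e) (h : Y i.1 ⟶ δ.1) (h' : Y i'.1 ⟶ δ.1)
    (hh : e i.1 ≫ h = δ.2) (hh' : e i'.1 ≫ h' = δ.2) :
    limit.π (smallDiag Q Y e) i ≫ h = limit.π (smallDiag Q Y e) i' ≫ h' := by
  obtain ⟨δd, hδd, hd1, hd2⟩ := Q.directed' _ i.2 _ i'.2
  obtain ⟨ε, hε, hextε, k, hk⟩ := hQ δd hδd
  obtain ⟨i₀, φ, hφ⟩ := hcover ε.2 hextε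
  have hei : (⟨Y i₀, e i₀⟩ : MorFrom C) ∈ Q.carrier := by
    refine Q.saturated' ε hε _ ⟨φ.inv, ?_⟩
    rw [← hφ, Category.assoc, φ.hom_inv_id, Category.comp_id]
  obtain ⟨g1, hg1⟩ := hd1
  obtain ⟨g2, hg2⟩ := hd2
  dsimp at hg1 hg2
  set i'' : SmallIdx Q Y e := ⟨i₀, hei⟩
  have hg : e i₀ ≫ (φ.hom ≫ k ≫ g1) = e i.1 := by
    rw [← Category.assoc, hφ, ← Category.assoc, hk, hg1]
  have hg' : e i₀ ≫ (φ.hom ≫ k ≫ g2) = e i'.1 := by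
    rw [← Category.assoc, hφ, ← Category.assoc, hk, hg2]
  have w1 : limit.π (smallDiag Q Y e) i'' ≫ (φ.hom ≫ k ≫ g1) =
      limit.π (smallDiag Q Y e) i :=
    limit.w (smallDiag Q Y e) (⟨φ.hom ≫ k ≫ g1, hg⟩ : i'' ⟶ i)
  have w2 : limit.π (smallDiag Q Y e) i'' ≫ (φ.hom ≫ k ≫ g2) =
      limit.π (smallDiag Q Y e) i' :=
    limit.w (smallDiag Q Y e) (⟨φ.hom ≫ k ≫ g2, hg'⟩ : i'' ⟶ i')
  have hepi : Epi (e i₀) := (hext i₀).1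
  have l1 : e i₀ ≫ φ.hom ≫ k ≫ g1 ≫ h = δ.2 := by
    rw [← Category.assoc, hφ, ← Category.assoc, hk, ← Category.assoc, hg1, hh]
  have l2 : e i₀ ≫ φ.hom ≫ k ≫ g2 ≫ h' = δ.2 := by
    rw [← Category.assoc, hφ, ← Category.assoc, hk, ← Category.assoc, hg2, hh']
  have key : φ.hom ≫ k ≫ g1 ≫ h = φ.hom ≫ k ≫ g2 ≫ h' := by
    apply hepi.left_cancellation
    rw [l1, l2]
  rw [← w1, ← w2]
  have key' : (φ.hom ≫ k ≫ g1) ≫ h = (φ.hom ≫ k ≫ g2) ≫ h' := by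
    simpa only [Category.assoc] using key
  exact (Category.assoc _ _ _).trans ((congrArg _ key').trans (Category.assoc _ _ _).symm)

/-- Any reduced filtration diagram has a limit (given ECWP and completeness). -/
lemma exists_limit_cone (hecwp : ECWP D) {C : D} (Q : ProjFilt C) (hQ : Q.Reduced) :
    ∃ c : Limits.Cone (FiltDiagram Q), Nonempty (Limits.IsLimit c) := by
  obtain ⟨ι, Y, e, hext, hcover⟩ := hecwp C
  choose pi ph hph using fun (δ : FiltCat Q) => exists_pres (Y := Y) (e := e) hQ hcover δ.2
  refine ⟨⟨limit (smallDiag Q Y e),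
    { app := fun δ => limit.π (smallDiag Q Y e) (pi δ) ≫ ph δ
      naturality := fun δ δ' k => ?_ }⟩, ⟨{
        lift := fun s => limit.lift (smallDiag Q Y e)
          ⟨s.pt, { app := fun i => s.π.app ⟨⟨Y i.1, e i.1⟩, i.2⟩
                   naturality := fun i i' g => ?_ }⟩
        fac := fun s δ => ?_
        uniq := fun s m hm => ?_ }⟩⟩
  · dsimp [FiltDiagram]
    erw [Category.id_comp, Category.assoc]
    exact pi_welldef hQ hext hcover (pi δ') (pi δ) (ph δ') (ph δ ≫ k.1) (hph δ')
      (by rw [← Category.assoc, hph δ, k.2])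
  · dsimp [FiltDiagram, smallDiag]
    rw [Category.id_comp]
    exact (cone_w s (a := ⟨⟨Y i.1, e i.1⟩, i.2⟩) (b := ⟨⟨Y i'.1, e i'.1⟩, i'.2⟩) g.1 g.2).symm
  · dsimp
    erw [← Category.assoc, limit.lift_π]
    exact cone_w s (a := ⟨⟨Y (pi δ).1, e (pi δ).1⟩, (pi δ).2⟩) (b := δ) (ph δ) (hph δ)
  · apply limit.hom_ext
    intro i
    have h0 : limit.π (smallDiag Q Y e) (pi ⟨⟨Y i.1, e i.1⟩, i.2⟩) ≫ ph ⟨⟨Y i.1, e i.1⟩, i.2⟩ =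
        limit.π (smallDiag Q Y e) i ≫ 𝟙 _ :=
      pi_welldef hQ hext hcover (pi ⟨⟨Y i.1, e i.1⟩, i.2⟩) i (ph ⟨⟨Y i.1, e i.1⟩, i.2⟩) (𝟙 _) (hph _) (Category.comp_id _)
    have h1 := hm ⟨⟨Y i.1, e i.1⟩, i.2⟩
    dsimp at h1 ⊢
    rw [limit.lift_π]
    dsimp
    erw [← h1, h0, Category.comp_id]
    rfl

end LimQ

/-! ### Limits in `KObj D` -/

lemma cone_app_congr {X0 : D} {P : ProjFilt X0} (c : Limits.Cone (FiltDiagram P))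
    {Y0 : D} {f g : X0 ⟶ Y0} (h : f = g) (hf : (⟨Y0, f⟩ : MorFrom X0) ∈ P.carrier)
    (hg : (⟨Y0, g⟩ : MorFrom X0) ∈ P.carrier) :
    c.π.app ⟨⟨Y0, f⟩, hf⟩ = c.π.app ⟨⟨Y0, g⟩, hg⟩ := by subst h; rfl

section KLim

variable [Limits.HasLimits D] (hEM : EMCat D)
variable {J : Type v} [Category.{v} J] {F : J ⥤ KObj D}

/-- The generating class for the limit filtration. -/
def limS (F : J ⥤ KObj D) : Set (MorFrom (limit (F ⋙ Kforget D))) :=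
  ⋃ j, pullSet (limit.π (F ⋙ Kforget D) j) ((F.obj j).obj.obj.filt).carrier

lemma limS_mem (j : J) {δj : MorFrom ((F.obj j).obj.obj.base)}
    (h : δj ∈ ((F.obj j).obj.obj.filt).carrier) :
    (⟨δj.1, limit.π (F ⋙ Kforget D) j ≫ δj.2⟩ : MorFrom (limit (F ⋙ Kforget D))) ∈ limS F :=
  Set.mem_iUnion.2 ⟨j, δj, h, rfl⟩

/-- The limit filtration. -/
noncomputable def limFilt (hEM : EMCat D) (F : J ⥤ KObj D) :
    ProjFilt (limit (F ⋙ Kforget D)) :=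
  redFilt hEM (genFilt (limS F))

lemma limFilt_mem (j : J) {δj : MorFrom ((F.obj j).obj.obj.base)}
    (h : δj ∈ ((F.obj j).obj.obj.filt).carrier) :
    (⟨δj.1, limit.π (F ⋙ Kforget D) j ≫ δj.2⟩ : MorFrom (limit (F ⋙ Kforget D)))
      ∈ (limFilt hEM F).carrier :=
  subset_red hEM _ (subset_gen _ (limS_mem j h))

/-- The cone over the filtration diagram of `F.obj j` induced by a cone over the
limit filtration diagram. -/
noncomputable def coneJ (c : Limits.Cone (FiltDiagram (limFilt hEM F))) (j : J) :
    Limits.Cone (FiltDiagram ((F.obj j).obj.obj.filt)) where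
  pt := c.pt
  π :=
    { app := fun δj => c.π.app ⟨⟨δj.1.1, limit.π (F ⋙ Kforget D) j ≫ δj.1.2⟩,
        limFilt_mem hEM j δj.2⟩
      naturality := fun δj δj' g => by
        dsimp [FiltDiagram]
        rw [Category.id_comp]
        exact (cone_w c (a := ⟨⟨δj.1.1, limit.π (F ⋙ Kforget D) j ≫ δj.1.2⟩,
          limFilt_mem hEM j δj.2⟩) (b := ⟨⟨δj'.1.1, limit.π (F ⋙ Kforget D) j ≫ δj'.1.2⟩,
          limFilt_mem hEM j δj'.2⟩) g.1 (by erw [Category.assoc, g.2])).symm }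

/-- Chosen limits witnessing that each `F.obj j` is iso-filtered. -/
noncomputable def hLim (F : J ⥤ KObj D) (j : J) :
    Limits.IsLimit (filtCone ((F.obj j).obj.obj.filt)) :=
  Classical.choice (F.obj j).property

/-- The component lifts. -/
noncomputable def wJ (c : Limits.Cone (FiltDiagram (limFilt hEM F))) (j : J) :
    c.pt ⟶ (F.obj j).obj.obj.base :=
  (hLim F j).lift (coneJ hEM c j)

lemma wJ_fac (c : Limits.Cone (FiltDiagram (limFilt hEM F))) (j : J)
    (δj : FiltCat ((F.obj j).obj.obj.filt)) :
    wJ hEM c j ≫ δj.1.2 = c.π.app ⟨⟨δj.1.1, limit.π (F ⋙ Kforget D) j ≫ δj.1.2⟩,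
      limFilt_mem hEM j δj.2⟩ :=
  (hLim F j).fac (coneJ hEM c j) δj

lemma wJ_natural (c : Limits.Cone (FiltDiagram (limFilt hEM F))) {j j' : J} (u : j ⟶ j') :
    wJ hEM c j ≫ (F ⋙ Kforget D).map u = wJ hEM c j' := by
  refine (hLim F j').hom_ext fun δ' => ?_
  have hmem : (⟨δ'.1.1, (F ⋙ Kforget D).map u ≫ δ'.1.2⟩ :
      MorFrom ((F.obj j).obj.obj.base)) ∈ ((F.obj j).obj.obj.filt).carrier :=
    (F.map u).hom.hom.mem δ'.1 δ'.2
  have h1 : wJ hEM c j ≫ ((F ⋙ Kforget D).map u ≫ δ'.1.2) =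
      c.π.app ⟨⟨δ'.1.1, limit.π (F ⋙ Kforget D) j ≫ (F ⋙ Kforget D).map u ≫ δ'.1.2⟩,
        limFilt_mem hEM j hmem⟩ :=
    wJ_fac hEM c j ⟨⟨δ'.1.1, (F ⋙ Kforget D).map u ≫ δ'.1.2⟩, hmem⟩
  show (wJ hEM c j ≫ (F ⋙ Kforget D).map u) ≫ δ'.1.2 = wJ hEM c j' ≫ δ'.1.2
  erw [Category.assoc, h1, wJ_fac hEM c j' δ']
  exact cone_app_congr c (by erw [← Category.assoc, limit.w]) _ _

/-- The lift into the limit of the bases. -/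
noncomputable def wLim (c : Limits.Cone (FiltDiagram (limFilt hEM F))) :
    c.pt ⟶ limit (F ⋙ Kforget D) :=
  limit.lift (F ⋙ Kforget D)
    ⟨c.pt,
      { app := wJ hEM c
        naturality := fun j j' u => by
          dsimp
          erw [Category.id_comp]
          exact (wJ_natural hEM c u).symm }⟩

lemma wLim_π (c : Limits.Cone (FiltDiagram (limFilt hEM F))) (j : J) :
    wLim hEM c ≫ limit.π (F ⋙ Kforget D) j = wJ hEM c j :=
  limit.lift_π _ _

lemma wLim_fac (c : Limits.Cone (FiltDiagram (limFilt hEM F)))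
    (δ : FiltCat (limFilt hEM F)) :
    wLim hEM c ≫ δ.1.2 = c.π.app δ := by
  -- first, the statement for elements of the generated filtration, via an auxiliary filtration
  set X := limit (F ⋙ Kforget D)
  set w := wLim hEM c
  let T : ProjFilt X :=
    { carrier := {γ | ∃ h : γ ∈ (limFilt hEM F).carrier, w ≫ γ.2 = c.π.app ⟨γ, h⟩}
      nonempty' := by
        refine ⟨⟨⊤_ D, terminal.from X⟩, term_mem _, ?_⟩
        apply terminal.hom_ext
      directed' := by
        rintro γ₁ ⟨h₁, e₁⟩ γ₂ ⟨h₂, e₂⟩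
        have hp : pairOf γ₁ γ₂ ∈ (limFilt hEM F).carrier := pair_mem _ h₁ h₂
        refine ⟨pairOf γ₁ γ₂, ⟨hp, ?_⟩, pair_dom_left _ _, pair_dom_right _ _⟩
        apply Limits.prod.hom_ext
        · erw [Category.assoc]
          show w ≫ prod.lift γ₁.2 γ₂.2 ≫ prod.fst = _
          erw [prod.lift_fst, e₁]
          exact (
            cone_w c (a := ⟨pairOf γ₁ γ₂, hp⟩) (b := ⟨γ₁, h₁⟩) prod.fst (prod.lift_fst _ _)).symm
        · erw [Category.assoc]
          show w ≫ prod.lift γ₁.2 γ₂.2 ≫ prod.snd = _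
          erw [prod.lift_snd, e₂]
          exact (
            cone_w c (a := ⟨pairOf γ₁ γ₂, hp⟩) (b := ⟨γ₂, h₂⟩) prod.snd (prod.lift_snd _ _)).symm
      saturated' := by
        rintro γ₁ ⟨h₁, e₁⟩ γ₂ ⟨k, hk⟩
        have h₂ : γ₂ ∈ (limFilt hEM F).carrier := (limFilt hEM F).saturated' γ₁ h₁ γ₂ ⟨k, hk⟩
        refine ⟨h₂, ?_⟩
        erw [← hk, ← Category.assoc, e₁,
          cone_w c (a := ⟨γ₁, h₁⟩) (b := ⟨γ₂, h₂⟩) k hk] }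
  have hST : limS F ⊆ T.carrier := by
    rintro γ hγ
    obtain ⟨j, δj, hδj, rfl⟩ := Set.mem_iUnion.1 hγ
    refine ⟨limFilt_mem hEM j hδj, ?_⟩
    show w ≫ (limit.π (F ⋙ Kforget D) j ≫ δj.2) = _
    rw [← Category.assoc]
    show (wLim hEM c ≫ limit.π (F ⋙ Kforget D) j) ≫ δj.2 = _
    rw [wLim_π hEM c j]
    exact wJ_fac hEM c j ⟨δj, hδj⟩
  have hgenT : genSet (limS F) ⊆ T.carrier := fun γ hγ => hγ T hST
  -- now the reduction step
  obtain ⟨γ, hγmem⟩ := δ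
  obtain ⟨ε, he, ⟨δ', hδ', m, hm, hem⟩, k, hk⟩ := hγmem
  have hQδ' : δ' ∈ (limFilt hEM F).carrier := subset_red hEM _ hδ'
  have hQε : ε ∈ (limFilt hEM F).carrier := ⟨ε, he, ⟨δ', hδ', m, hm, hem⟩, dom_refl _⟩
  obtain ⟨hQδ'2, eδ'⟩ := hgenT hδ'
  have hcw : c.π.app ⟨ε, hQε⟩ ≫ m = c.π.app ⟨δ', hQδ'2⟩ :=
    cone_w c (a := ⟨ε, hQε⟩) (b := ⟨δ', hQδ'2⟩) m hem
  have hwε : w ≫ ε.2 = c.π.app ⟨ε, hQε⟩ := by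
    apply hm.right_cancellation
    erw [Category.assoc, hem, eδ', hcw]
  have hγQ : γ ∈ (limFilt hEM F).carrier := (limFilt hEM F).saturated' ε hQε γ ⟨k, hk⟩
  calc w ≫ γ.2 = (w ≫ ε.2) ≫ k := by rw [Category.assoc, hk]
    _ = c.π.app ⟨ε, hQε⟩ ≫ k := by rw [hwε]; rfl
    _ = (show c.pt ⟶ γ.1 from c.π.app ⟨γ, hγQ⟩) := by exact cone_w c (a := ⟨ε, hQε⟩) (b := ⟨γ, hγQ⟩) k hk

/-- The limit filtration is an iso-filtration. -/
noncomputable def limFilt_isLimit (hEM : EMCat D) (F : J ⥤ KObj D) :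
    Limits.IsLimit (filtCone (limFilt hEM F)) where
  lift c := wLim hEM c
  fac c δ := wLim_fac hEM c δ
  uniq c m hm := by
    have key : ∀ j, m ≫ limit.π (F ⋙ Kforget D) j = wJ hEM c j := by
      intro j
      exact (hLim F j).hom_ext fun δj => by
        show (m ≫ limit.π (F ⋙ Kforget D) j) ≫ δj.1.2 = wJ hEM c j ≫ δj.1.2
        erw [Category.assoc, wJ_fac hEM c j δj]
        exact hm ⟨⟨δj.1.1, limit.π (F ⋙ Kforget D) j ≫ δj.1.2⟩, limFilt_mem hEM j δj.2⟩
    exact limit.hom_ext fun j => (key j).trans (wLim_π hEM c j).symm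

/-- The limit object in `KObj D`. -/
noncomputable def kLimObj (hEM : EMCat D) (F : J ⥤ KObj D) : KObj D :=
  ⟨⟨⟨limit (F ⋙ Kforget D), limFilt hEM F⟩, redFilt_reduced hEM _⟩,
    ⟨limFilt_isLimit hEM F⟩⟩

/-- The limit cone in `KObj D`. -/
noncomputable def kLimCone (hEM : EMCat D) (F : J ⥤ KObj D) : Limits.Cone F where
  pt := kLimObj hEM F
  π :=
    { app := fun j => ⟨⟨show PHom (kLimObj hEM F).obj.obj (F.obj j).obj.obj from
        ⟨limit.π (F ⋙ Kforget D) j, fun δj hδj => limFilt_mem hEM j hδj⟩⟩⟩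
      naturality := fun j j' u => by
        apply ObjectProperty.hom_ext; apply ObjectProperty.hom_ext; apply PHom.ext'
        show 𝟙 _ ≫ limit.π (F ⋙ Kforget D) j' =
          limit.π (F ⋙ Kforget D) j ≫ (F ⋙ Kforget D).map u
        rw [Category.id_comp, limit.w] }

/-- The cone over the base diagram induced by a cone in `KObj D`. -/
def sCone (F : J ⥤ KObj D) (s : Limits.Cone F) : Limits.Cone (F ⋙ Kforget D) where
  pt := s.pt.obj.obj.base
  π :=
    { app := fun j => (s.π.app j).hom.hom.toHom
      naturality := fun j j' u => by
        have := congrArg (fun f => f.hom.hom.toHom) (s.π.naturality u)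
        dsimp at this ⊢
        rw [Category.id_comp] at this
        erw [Category.id_comp]
        exact this }

/-- The induced morphism to the limit of the bases. -/
noncomputable def sLift (F : J ⥤ KObj D) (s : Limits.Cone F) :
    s.pt.obj.obj.base ⟶ limit (F ⋙ Kforget D) :=
  limit.lift (F ⋙ Kforget D) (sCone F s)

lemma sLift_mem (hEM : EMCat D) (F : J ⥤ KObj D) (s : Limits.Cone F) :
    ∀ δ ∈ (limFilt hEM F).carrier,
      (⟨δ.1, sLift F s ≫ δ.2⟩ : MorFrom s.pt.obj.obj.base) ∈ s.pt.obj.obj.filt.carrier := by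
  refine pull_red_sub hEM _ (genFilt (limS F)) s.pt.obj.obj.filt s.pt.obj.property ?_
  intro γ hγ
  have hpush : genSet (limS F) ⊆ (pushFilt (sLift F s) s.pt.obj.obj.filt).carrier := by
    apply gen_sub
    rintro γ' hγ'
    obtain ⟨j, δj, hδj, rfl⟩ := Set.mem_iUnion.1 hγ'
    show (⟨δj.1, sLift F s ≫ limit.π (F ⋙ Kforget D) j ≫ δj.2⟩ : MorFrom _)
      ∈ s.pt.obj.obj.filt.carrier
    have hcomp : sLift F s ≫ limit.π (F ⋙ Kforget D) j ≫ δj.2 =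
        (s.π.app j).hom.hom.toHom ≫ δj.2 := by
      rw [← Category.assoc]
      unfold sLift
      erw [limit.lift_π]
      rfl
    rw [morFrom_ext hcomp]
    exact (s.π.app j).hom.hom.mem δj hδj
  exact hpush hγ

/-- The limit cone in `KObj D` is a limit cone. -/
noncomputable def kLimIsLimit (hEM : EMCat D) (F : J ⥤ KObj D) :
    Limits.IsLimit (kLimCone hEM F) where
  lift s :=
    ⟨⟨show PHom s.pt.obj.obj (kLimObj hEM F).obj.obj from
      ⟨sLift F s, sLift_mem hEM F s⟩⟩⟩
  fac s j := by
    apply ObjectProperty.hom_ext; apply ObjectProperty.hom_ext; apply PHom.ext'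
    exact limit.lift_π _ _
  uniq s m hm := by
    apply ObjectProperty.hom_ext; apply ObjectProperty.hom_ext; apply PHom.ext'
    apply limit.hom_ext
    intro j
    have := congrArg (fun f => f.hom.hom.toHom) (hm j)
    show m.hom.hom.toHom ≫ limit.π (F ⋙ Kforget D) j = sLift F s ≫ limit.π (F ⋙ Kforget D) j
    unfold sLift
    erw [limit.lift_π]
    exact this

end KLim

/-! ### Colimits in `KObj D` -/

section KColim

variable [Limits.HasLimits D] [Limits.HasColimits D]
variable {J : Type v} [Category.{v} J]

/-- The filtration on the colimit of the bases. -/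
noncomputable def colimFilt (F : J ⥤ KObj D) : ProjFilt (colimit (F ⋙ Kforget D)) where
  carrier := {δ | ∀ j, (⟨δ.1, colimit.ι (F ⋙ Kforget D) j ≫ δ.2⟩ :
    MorFrom ((F.obj j).obj.obj.base)) ∈ (F.obj j).obj.obj.filt.carrier}
  nonempty' := by
    refine ⟨⟨⊤_ D, terminal.from _⟩, fun j => ?_⟩
    erw [morFrom_ext (terminal.comp_from _)]
    exact term_mem _
  directed' := by
    intro δ₁ h₁ δ₂ h₂
    refine ⟨pairOf δ₁ δ₂, fun j => ?_, pair_dom_left _ _, pair_dom_right _ _⟩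
    show (⟨δ₁.1 ⨯ δ₂.1, colimit.ι (F ⋙ Kforget D) j ≫ prod.lift δ₁.2 δ₂.2⟩ : MorFrom _) ∈ _
    rw [morFrom_ext (prod.comp_lift _ _ _)]
    exact pair_mem _ (h₁ j) (h₂ j)
  saturated' := by
    rintro δ₁ h₁ δ₂ ⟨k, hk⟩
    intro j
    exact (F.obj j).obj.obj.filt.saturated' _ (h₁ j) _
      ⟨k, by erw [Category.assoc, hk]⟩

lemma colimFilt_reduced (hEM : EMCat D) (F : J ⥤ KObj D) : (colimFilt F).Reduced := by
  intro δ hδ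
  obtain ⟨Z, e, m, he, hm, hem⟩ := hEM.fact δ.2
  refine ⟨⟨Z, e⟩, fun j => ?_, he, ⟨m, hem⟩⟩
  have h1 := hδ j
  obtain ⟨εj, hεj, hejext, h', hh'⟩ := (F.obj j).obj.property _ h1
  obtain ⟨d, hd, -⟩ := hEM.diag εj.2 m (colimit.ι (F ⋙ Kforget D) j ≫ e) h' hejext hm
    (by erw [Category.assoc, hem]; exact hh'.symm)
  exact (F.obj j).obj.obj.filt.saturated' εj hεj _ ⟨d, hd⟩

variable (hecwp : ECWP D) (hEM : EMCat D) (F : J ⥤ KObj D)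

/-- A chosen limit cone over the colimit filtration diagram. -/
noncomputable def ellCone : Limits.Cone (FiltDiagram (colimFilt F)) :=
  (exists_limit_cone hecwp (colimFilt F) (colimFilt_reduced hEM F)).choose

/-- The chosen cone is a limit cone. -/
noncomputable def ellIsLimit : Limits.IsLimit (ellCone hecwp hEM F) :=
  Classical.choice (exists_limit_cone hecwp (colimFilt F) (colimFilt_reduced hEM F)).choose_spec

/-- The canonical morphism from the colimit of the bases to the limit of the
colimit filtration diagram. -/
noncomputable def tMap : colimit (F ⋙ Kforget D) ⟶ (ellCone hecwp hEM F).pt :=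
  (ellIsLimit hecwp hEM F).lift (filtCone (colimFilt F))

lemma tMap_fac (δ : FiltCat (colimFilt F)) :
    tMap hecwp hEM F ≫ (ellCone hecwp hEM F).π.app δ = δ.1.2 :=
  (ellIsLimit hecwp hEM F).fac (filtCone (colimFilt F)) δ

/-- The filtration on the new apex. -/
noncomputable def colimQ : ProjFilt (ellCone hecwp hEM F).pt where
  carrier := {γ | ∃ (δ : FiltCat (colimFilt F)) (h : δ.1.1 ⟶ γ.1),
    (ellCone hecwp hEM F).π.app δ ≫ h = γ.2}
  nonempty' := by
    obtain ⟨δ0, hδ0⟩ := (colimFilt F).nonempty'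
    exact ⟨⟨δ0.1, (ellCone hecwp hEM F).π.app ⟨δ0, hδ0⟩⟩, ⟨δ0, hδ0⟩, 𝟙 _,
      Category.comp_id _⟩
  directed' := by
    rintro γ₁ ⟨δ₁, h₁, hh₁⟩ γ₂ ⟨δ₂, h₂, hh₂⟩
    obtain ⟨δ, hδ, ⟨k₁, hk₁⟩, ⟨k₂, hk₂⟩⟩ := (colimFilt F).directed' δ₁.1 δ₁.2 δ₂.1 δ₂.2
    refine ⟨⟨δ.1, (ellCone hecwp hEM F).π.app ⟨δ, hδ⟩⟩, ⟨⟨δ, hδ⟩, 𝟙 _, Category.comp_id _⟩,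
      ⟨k₁ ≫ h₁, ?_⟩, ⟨k₂ ≫ h₂, ?_⟩⟩
    · erw [← Category.assoc, cone_w (ellCone hecwp hEM F) (a := ⟨δ, hδ⟩) (b := δ₁) k₁ hk₁, hh₁]
    · erw [← Category.assoc, cone_w (ellCone hecwp hEM F) (a := ⟨δ, hδ⟩) (b := δ₂) k₂ hk₂, hh₂]
  saturated' := by
    rintro γ₁ ⟨δ, h, hh⟩ γ₂ ⟨k, hk⟩
    exact ⟨δ, h ≫ k, by erw [← Category.assoc, hh, hk]⟩

lemma colimQ_mem (δ : FiltCat (colimFilt F)) :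
    (⟨δ.1.1, (ellCone hecwp hEM F).π.app δ⟩ : MorFrom (ellCone hecwp hEM F).pt)
      ∈ (colimQ hecwp hEM F).carrier :=
  ⟨δ, 𝟙 _, Category.comp_id _⟩

lemma pε_extremal {δ : FiltCat (colimFilt F)} (hext : ExtremalEpi δ.1.2) :
    ExtremalEpi ((ellCone hecwp hEM F).π.app δ) := by
  constructor
  · have h1 : Epi (tMap hecwp hEM F ≫ (ellCone hecwp hEM F).π.app δ) := by
      rw [tMap_fac]; exact hext.1
    exact @epi_of_epi _ _ _ _ _ _ _ h1
  · intro Z g m hm hgm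
    refine hext.2 (tMap hecwp hEM F ≫ g) m hm ?_
    erw [Category.assoc, hgm, tMap_fac]

lemma colimQ_reduced : (colimQ hecwp hEM F).Reduced := by
  rintro γ ⟨δ, h, hh⟩
  obtain ⟨ε, hε, hεext, k, hk⟩ := colimFilt_reduced hEM F δ.1 δ.2
  refine ⟨⟨ε.1, (ellCone hecwp hEM F).π.app ⟨ε, hε⟩⟩, colimQ_mem hecwp hEM F ⟨ε, hε⟩,
    pε_extremal hecwp hEM F (δ := ⟨ε, hε⟩) hεext, k ≫ h, ?_⟩
  erw [← Category.assoc, cone_w (ellCone hecwp hEM F) (a := ⟨ε, hε⟩) (b := δ) k hk, hh]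

/-- The restriction of a cone over the apex filtration diagram to the colimit
filtration diagram. -/
noncomputable def colimQCone (c : Limits.Cone (FiltDiagram (colimQ hecwp hEM F))) :
    Limits.Cone (FiltDiagram (colimFilt F)) where
  pt := c.pt
  π :=
    { app := fun δ => c.π.app ⟨⟨δ.1.1, (ellCone hecwp hEM F).π.app δ⟩,
        colimQ_mem hecwp hEM F δ⟩
      naturality := fun δ δ' k => by
        dsimp [FiltDiagram]
        rw [Category.id_comp]
        exact (cone_w c (a := ⟨⟨δ.1.1, (ellCone hecwp hEM F).π.app δ⟩,
          colimQ_mem hecwp hEM F δ⟩) (b := ⟨⟨δ'.1.1, (ellCone hecwp hEM F).π.app δ'⟩,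
          colimQ_mem hecwp hEM F δ'⟩) k.1
          (cone_w (ellCone hecwp hEM F) (a := δ) (b := δ') k.1 k.2)).symm }

/-- The new apex filtration is an iso-filtration. -/
noncomputable def colimQ_isLimit : Limits.IsLimit (filtCone (colimQ hecwp hEM F)) where
  lift c := (ellIsLimit hecwp hEM F).lift (colimQCone hecwp hEM F c)
  fac c γ := by
    obtain ⟨δ, h, hh⟩ := γ.2
    have fac1 := (ellIsLimit hecwp hEM F).fac (colimQCone hecwp hEM F c) δ
    show _ ≫ γ.1.2 = c.π.app γ
    exact (congrArg ((ellIsLimit hecwp hEM F).lift (colimQCone hecwp hEM F c) ≫ ·) hh.symm).trans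
      ((Category.assoc _ _ _).symm.trans ((congrArg (· ≫ h) fac1).trans
        (cone_w c (a := ⟨⟨δ.1.1, (ellCone hecwp hEM F).π.app δ⟩, colimQ_mem hecwp hEM F δ⟩) (b := γ) h hh)))
  uniq c m hm := by
    refine (ellIsLimit hecwp hEM F).hom_ext fun δ => ?_
    erw [(ellIsLimit hecwp hEM F).fac (colimQCone hecwp hEM F c) δ]
    exact hm ⟨⟨δ.1.1, (ellCone hecwp hEM F).π.app δ⟩, colimQ_mem hecwp hEM F δ⟩

/-- The colimit object in `KObj D`. -/
noncomputable def kColimObj : KObj D :=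
  ⟨⟨⟨(ellCone hecwp hEM F).pt, colimQ hecwp hEM F⟩, colimQ_reduced hecwp hEM F⟩,
    ⟨colimQ_isLimit hecwp hEM F⟩⟩

lemma tMap_mem {γ : MorFrom (ellCone hecwp hEM F).pt}
    (hγ : γ ∈ (colimQ hecwp hEM F).carrier) (j : J) :
    (⟨γ.1, (colimit.ι (F ⋙ Kforget D) j ≫ tMap hecwp hEM F) ≫ γ.2⟩ :
      MorFrom ((F.obj j).obj.obj.base)) ∈ (F.obj j).obj.obj.filt.carrier := by
  obtain ⟨δ, h, hh⟩ := hγ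
  have ht : tMap hecwp hEM F ≫ γ.2 = δ.1.2 ≫ h := by
    erw [← hh, ← Category.assoc, tMap_fac]
    rfl
  refine (F.obj j).obj.obj.filt.saturated' _ (δ.2 j) _ ⟨h, ?_⟩
  erw [Category.assoc, Category.assoc, ht]

/-- The colimit cocone in `KObj D`. -/
noncomputable def kColimCocone : Limits.Cocone F where
  pt := kColimObj hecwp hEM F
  ι :=
    { app := fun j => ⟨⟨show PHom (F.obj j).obj.obj (kColimObj hecwp hEM F).obj.obj from
        ⟨colimit.ι (F ⋙ Kforget D) j ≫ tMap hecwp hEM F,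
          fun γ hγ => tMap_mem hecwp hEM F hγ j⟩⟩⟩
      naturality := fun j j' u => by
        apply ObjectProperty.hom_ext; apply ObjectProperty.hom_ext; apply PHom.ext'
        show (F.map u).hom.hom.toHom ≫ colimit.ι (F ⋙ Kforget D) j' ≫ tMap hecwp hEM F =
          (colimit.ι (F ⋙ Kforget D) j ≫ tMap hecwp hEM F) ≫ 𝟙 _
        erw [Category.comp_id, ← Category.assoc]
        congr 1
        exact colimit.w (F ⋙ Kforget D) u }

/-- The cocone over the bases induced by a cocone in `KObj D`. -/
def sCocone (s : Limits.Cocone F) : Limits.Cocone (F ⋙ Kforget D) where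
  pt := s.pt.obj.obj.base
  ι :=
    { app := fun j => (s.ι.app j).hom.hom.toHom
      naturality := fun j j' u => by
        have := congrArg (fun f => f.hom.hom.toHom) (s.ι.naturality u)
        dsimp at this ⊢
        rw [Category.comp_id] at this
        erw [Category.comp_id]
        exact this }

/-- The descent on colimits of bases. -/
noncomputable def fDesc (s : Limits.Cocone F) : colimit (F ⋙ Kforget D) ⟶ s.pt.obj.obj.base :=
  colimit.desc (F ⋙ Kforget D) (sCocone F s)

lemma fDesc_mem (s : Limits.Cocone F) {α : MorFrom s.pt.obj.obj.base}
    (hα : α ∈ s.pt.obj.obj.filt.carrier) :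
    (⟨α.1, fDesc F s ≫ α.2⟩ : MorFrom (colimit (F ⋙ Kforget D))) ∈ (colimFilt F).carrier := by
  intro j
  have hc : colimit.ι (F ⋙ Kforget D) j ≫ fDesc F s ≫ α.2 = (s.ι.app j).hom.hom.toHom ≫ α.2 := by
    rw [← Category.assoc]
    unfold fDesc
    erw [colimit.ι_desc]
    rfl
  erw [morFrom_ext hc]
  exact (s.ι.app j).hom.hom.mem α hα

/-- Chosen limit for the apex of a cocone in `KObj D`. -/
noncomputable def hApex (s : Limits.Cocone F) : Limits.IsLimit (filtCone s.pt.obj.obj.filt) :=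
  Classical.choice s.pt.property

/-- The cone over the apex filtration diagram with vertex the new apex. -/
noncomputable def apexCone (s : Limits.Cocone F) :
    Limits.Cone (FiltDiagram s.pt.obj.obj.filt) where
  pt := (ellCone hecwp hEM F).pt
  π :=
    { app := fun α => (ellCone hecwp hEM F).π.app ⟨⟨α.1.1, fDesc F s ≫ α.1.2⟩,
        fDesc_mem F s α.2⟩
      naturality := fun α α' h => by
        dsimp [FiltDiagram]
        rw [Category.id_comp]
        exact (cone_w (ellCone hecwp hEM F)
          (a := ⟨⟨α.1.1, fDesc F s ≫ α.1.2⟩, fDesc_mem F s α.2⟩)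
          (b := ⟨⟨α'.1.1, fDesc F s ≫ α'.1.2⟩, fDesc_mem F s α'.2⟩) h.1
          (by rw [Category.assoc, h.2])).symm }

/-- The induced morphism from the new apex to the apex of a cocone. -/
noncomputable def fBar (s : Limits.Cocone F) : (ellCone hecwp hEM F).pt ⟶ s.pt.obj.obj.base :=
  (hApex F s).lift (apexCone hecwp hEM F s)

lemma fBar_fac (s : Limits.Cocone F) (α : FiltCat s.pt.obj.obj.filt) :
    fBar hecwp hEM F s ≫ α.1.2 = (ellCone hecwp hEM F).π.app
      ⟨⟨α.1.1, fDesc F s ≫ α.1.2⟩, fDesc_mem F s α.2⟩ :=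
  (hApex F s).fac (apexCone hecwp hEM F s) α

lemma tMap_fBar (s : Limits.Cocone F) :
    tMap hecwp hEM F ≫ fBar hecwp hEM F s = fDesc F s := by
  refine (hApex F s).hom_ext fun α => ?_
  show (tMap hecwp hEM F ≫ fBar hecwp hEM F s) ≫ α.1.2 = fDesc F s ≫ α.1.2
  erw [Category.assoc, fBar_fac hecwp hEM F s α,
    tMap_fac hecwp hEM F ⟨⟨α.1.1, fDesc F s ≫ α.1.2⟩, fDesc_mem F s α.2⟩]

/-- The colimit cocone in `KObj D` is a colimit cocone. -/
noncomputable def kColimIsColimit : Limits.IsColimit (kColimCocone hecwp hEM F) where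
  desc s :=
    ⟨⟨show PHom (kColimObj hecwp hEM F).obj.obj s.pt.obj.obj from
      ⟨fBar hecwp hEM F s, by
        intro α hα
        have he : fBar hecwp hEM F s ≫ α.2 = (ellCone hecwp hEM F).π.app
            ⟨⟨α.1, fDesc F s ≫ α.2⟩, fDesc_mem F s hα⟩ :=
          fBar_fac hecwp hEM F s ⟨α, hα⟩
        erw [morFrom_ext he]
        exact colimQ_mem hecwp hEM F ⟨⟨α.1, fDesc F s ≫ α.2⟩, fDesc_mem F s hα⟩⟩⟩⟩
  fac s j := by
    apply ObjectProperty.hom_ext; apply ObjectProperty.hom_ext; apply PHom.ext'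
    show (colimit.ι (F ⋙ Kforget D) j ≫ tMap hecwp hEM F) ≫ fBar hecwp hEM F s =
      (s.ι.app j).hom.hom.toHom
    rw [Category.assoc, tMap_fBar hecwp hEM F s]
    unfold fDesc
    erw [colimit.ι_desc]
    rfl
  uniq s m hm := by
    apply ObjectProperty.hom_ext; apply ObjectProperty.hom_ext; apply PHom.ext'
    have tm : tMap hecwp hEM F ≫ m.hom.hom.toHom = fDesc F s := by
      refine colimit.hom_ext fun j => ?_
      have h1 := congrArg (fun f => f.hom.hom.toHom) (hm j)
      show colimit.ι (F ⋙ Kforget D) j ≫ tMap hecwp hEM F ≫ m.hom.hom.toHom =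
        colimit.ι (F ⋙ Kforget D) j ≫ fDesc F s
      unfold fDesc
      erw [colimit.ι_desc, ← Category.assoc]
      exact h1
    refine (hApex F s).hom_ext fun α => ?_
    show m.hom.hom.toHom ≫ α.1.2 = fBar hecwp hEM F s ≫ α.1.2
    obtain ⟨δ, h, hh⟩ := m.hom.hom.mem α.1 α.2
    have hcond : δ.1.2 ≫ h = fDesc F s ≫ α.1.2 := by
      erw [← tMap_fac hecwp hEM F δ, Category.assoc, hh, ← Category.assoc, tm]
    have hh2 : (ellCone hecwp hEM F).π.app δ ≫ h = m.hom.hom.toHom ≫ α.1.2 := hh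
    rw [fBar_fac hecwp hEM F s α, ← hh2]
    exact cone_w (ellCone hecwp hEM F) (a := δ)
      (b := ⟨⟨α.1.1, fDesc F s ≫ α.1.2⟩, fDesc_mem F s α.2⟩) h hcond

end KColim

/-- `KD` is complete and cocomplete. -/
theorem kobj_complete_cocomplete [Limits.HasLimits D] [Limits.HasColimits D]
    (hecwp : ECWP D) (hEM : EMCat D) :
    Limits.HasLimits (KObj D) ∧ Limits.HasColimits (KObj D) := by
  constructor
  · exact { has_limits_of_shape := fun J _ =>
      { has_limit := fun F => Limits.HasLimit.mk ⟨kLimCone hEM F, kLimIsLimit hEM F⟩ } }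
  · exact { has_colimits_of_shape := fun J _ =>
      { has_colimit := fun F => Limits.HasColimit.mk
          ⟨kColimCocone hecwp hEM F, kColimIsColimit hecwp hEM F⟩ } }

end FilteredCats
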